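/- Let s ≥ 2 and let m_1 > m_2 > ... > m_s ≥ 1 and n_1 > n_2 > ... > n_s ≥ 1 be integers with m_1 = n_1. Define X := Σ_{k=1}^s (Σ_{l=1}^k m_k(e_{kl}+e_{lk}) − m_k e_{kk}) and Y := Σ_{k=1}^s (Σ_{l=1}^k n_k(e_{kl}+e_{lk}) − n_k e_{kk}) in M_s(ℤ) (i.e., the symmetric matrices with (i,j)-entry m_{max(i,j)} resp. n_{max(i,j)}). Then X and Y are congruent over ℤ (i.e., there is H ∈ GL_s(ℤ) with HᵀXH = Y) if and only if the multisets {{m_1−m_2, ..., m_{s−1}−m_s, m_s}} and {{n_1−n_2, ..., n_{s−1}−n_s, n_s}} are equal. -/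

import Mathlib

open Matrix Finset Module Submodule

section Stmt7Aux
variable {s : ℕ}


def Ls (s : ℕ) : Matrix (Fin s) (Fin s) ℤ := Matrix.of fun i j => if j ≤ i then 1 else 0

lemma Ls_det : (Ls s).det = 1 := by
  rw [Matrix.det_of_lowerTriangular (Ls s)]
  · simp [Ls]
  · intro i j hij
    simp only [Ls, Matrix.of_apply, ite_eq_right_iff]
    intro h; exact absurd (lt_of_le_of_lt h hij) (lt_irrefl _)

def dvec (m : Fin s → ℤ) : Fin s → ℤ :=
  fun k => m k - if h : (k : ℕ) + 1 < s then m ⟨(k : ℕ) + 1, h⟩ else 0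

lemma tele (m : Fin s → ℤ) (t : Fin s) :
    (∑ k ∈ univ.filter fun k => t ≤ k, dvec m k) = m t := by
  obtain ⟨t, ht⟩ := t
  induction' hn : s - 1 - t with n ih generalizing t
  · have ht1 : t = s - 1 := by omega
    have : (univ.filter fun k : Fin s => (⟨t, ht⟩ : Fin s) ≤ k) = {⟨t, ht⟩} := by
      ext ⟨k, hk⟩
      simp [Fin.mk_le_mk, Fin.mk.injEq]
      omega
    rw [this, Finset.sum_singleton]
    simp only [dvec]
    rw [dif_neg (by omega)]
    ring
  · have ht1 : t + 1 < s := by omega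
    have hsplit : (univ.filter fun k : Fin s => (⟨t, ht⟩ : Fin s) ≤ k) =
        insert ⟨t, ht⟩ (univ.filter fun k : Fin s => (⟨t + 1, ht1⟩ : Fin s) ≤ k) := by
      ext ⟨k, hk⟩
      simp [Fin.mk_le_mk, Fin.mk.injEq]
      omega
    rw [hsplit, Finset.sum_insert (by simp [Fin.mk_le_mk])]
    rw [ih (t + 1) ht1 (by omega)]
    simp only [dvec]
    rw [dif_pos ht1]
    ring

lemma Xfact (m : Fin s → ℤ) :
    (Matrix.of fun i j => m (max i j)) = (Ls s)ᵀ * Matrix.diagonal (dvec m) * Ls s := by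
  ext i j
  have h1 : ∀ k, ((Ls s)ᵀ * Matrix.diagonal (dvec m)) i k = Ls s k i * dvec m k := by
    intro k; simp [Matrix.mul_diagonal]
  rw [Matrix.mul_apply, Matrix.of_apply]
  symm
  calc (∑ k, ((Ls s)ᵀ * Matrix.diagonal (dvec m)) i k * Ls s k j)
      = ∑ k, if max i j ≤ k then dvec m k else 0 := by
        refine Finset.sum_congr rfl fun k _ => ?_
        rw [h1]
        simp only [Ls, Matrix.of_apply, max_le_iff]
        by_cases hik : i ≤ k <;> by_cases hjk : j ≤ k <;> simp [hik, hjk]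
    _ = m (max i j) := by rw [← Finset.sum_filter]; exact tele m _

def Qf (d v : Fin s → ℤ) : ℤ := ∑ i, d i * v i ^ 2

lemma Qf_single (d : Fin s → ℤ) (i : Fin s) : Qf d (Pi.single i 1) = d i := by
  rw [Qf, Finset.sum_eq_single i]
  · simp
  · intro j _ hj; simp [Pi.single_apply, hj]
  · simp

lemma Qf_zero_of (d : Fin s → ℤ) (hd : ∀ i, 0 < d i) {v : Fin s → ℤ} {t : ℤ}
    (hv : Qf d v ≤ t) {i : Fin s} (hi : ¬ d i ≤ t) : v i = 0 := by
  by_contra h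
  have h2 : 1 ≤ v i ^ 2 := by
    have := Int.one_le_abs (by simpa using h)
    nlinarith [sq_abs (v i)]
  have h3 : d i * v i ^ 2 ≤ ∑ j, d j * v j ^ 2 :=
    Finset.single_le_sum (f := fun j => d j * v j ^ 2)
      (fun j _ => mul_nonneg (hd j).le (sq_nonneg _)) (Finset.mem_univ i)
  have hv2 : (∑ j, d j * v j ^ 2) ≤ t := hv
  nlinarith [hd i]

lemma span_Qf (d : Fin s → ℤ) (hd : ∀ i, 0 < d i) (t : ℤ) :
    span ℤ {v : Fin s → ℤ | Qf d v ≤ t} =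
      span ℤ (Set.range fun i : {i : Fin s // d i ≤ t} => Pi.single (i : Fin s) (1 : ℤ)) := by
  apply le_antisymm
  · rw [span_le]
    intro v hv
    have hv' : Qf d v ≤ t := hv
    have : v = ∑ i : Fin s, v i • Pi.single i (1 : ℤ) := by
      funext j
      rw [Finset.sum_apply]
      rw [Finset.sum_eq_single j]
      · simp
      · intro i _ hij; simp [Pi.single_apply, hij]
      · simp
    rw [this]
    refine Submodule.sum_mem _ fun i _ => ?_
    by_cases hi : d i ≤ t
    · exact Submodule.smul_mem _ _ (subset_span ⟨⟨i, hi⟩, rfl⟩)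
    · rw [Qf_zero_of d hd hv' hi]; simp
  · rw [span_le]
    rintro w ⟨⟨i, hi⟩, rfl⟩
    refine subset_span ?_
    show Qf d (Pi.single i 1) ≤ t
    rw [Qf_single]; exact hi

lemma finrank_span_Qf (d : Fin s → ℤ) (hd : ∀ i, 0 < d i) (t : ℤ) :
    finrank ℤ ↥(span ℤ {v : Fin s → ℤ | Qf d v ≤ t}) =
      (univ.filter fun i => d i ≤ t).card := by
  rw [span_Qf d hd t]
  have hli : LinearIndependent ℤ
      (fun i : {i : Fin s // d i ≤ t} => (Pi.single (i : Fin s) (1 : ℤ) : Fin s → ℤ)) := by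
    have hb := (Pi.basisFun ℤ (Fin s)).linearIndependent
    have := hb.comp (fun i : {i : Fin s // d i ≤ t} => (i : Fin s)) Subtype.val_injective
    convert this using 1
    funext i
    simp [Pi.basisFun_apply]
    exact Subsingleton.elim _ _
  rw [finrank_span_eq_card hli, Fintype.card_subtype]

lemma count_eq (d d' : Fin s → ℤ) (hd : ∀ i, 0 < d i) (hd' : ∀ i, 0 < d' i)
    (G : Matrix (Fin s) (Fin s) ℤ) (hG : IsUnit G.det)
    (hcong : Gᵀ * Matrix.diagonal d * G = Matrix.diagonal d') (t : ℤ) :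
    (univ.filter fun i => d' i ≤ t).card = (univ.filter fun i => d i ≤ t).card := by
  haveI := G.invertibleOfIsUnitDet hG
  let e := G.toLinearEquiv' ‹_›
  have he : ∀ v, e v = G.mulVec v := fun v => by
    show Matrix.toLin' G v = _
    rw [Matrix.toLin'_apply]
  have h1 : ∀ (c : Fin s → ℤ) (w), w ⬝ᵥ (Matrix.diagonal c).mulVec w = Qf c w := by
    intro c w
    simp only [Matrix.mulVec_diagonal, dotProduct, Qf]
    exact Finset.sum_congr rfl fun i _ => by ring
  have hq : ∀ v, Qf d' v = Qf d (G.mulVec v) := by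
    intro v
    have h2 := congrArg (fun M : Matrix (Fin s) (Fin s) ℤ => v ⬝ᵥ M.mulVec v) hcong
    rw [h1] at h2
    rw [← h2]
    calc v ⬝ᵥ ((Gᵀ * Matrix.diagonal d * G) *ᵥ v)
        = v ⬝ᵥ (Gᵀ *ᵥ (Matrix.diagonal d *ᵥ (G *ᵥ v))) := by
          rw [Matrix.mulVec_mulVec, Matrix.mulVec_mulVec, Matrix.mul_assoc]
      _ = (G *ᵥ v) ⬝ᵥ (Matrix.diagonal d *ᵥ (G *ᵥ v)) := by
          rw [Matrix.dotProduct_mulVec, Matrix.vecMul_transpose]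
      _ = Qf d (G *ᵥ v) := h1 _ _
  have himg : (e : (Fin s → ℤ) →ₗ[ℤ] (Fin s → ℤ)) '' {v | Qf d' v ≤ t} =
      {v | Qf d v ≤ t} := by
    ext w
    simp only [Set.mem_image, Set.mem_setOf_eq]
    constructor
    · rintro ⟨v, hv, rfl⟩
      show Qf d (e v) ≤ t
      rw [he, ← hq]; exact hv
    · intro hw
      refine ⟨e.symm w, ?_, by simp⟩
      rw [hq, ← he, e.apply_symm_apply]; exact hw
  have hmap : (span ℤ {v : Fin s → ℤ | Qf d' v ≤ t}).map
      (e : (Fin s → ℤ) →ₗ[ℤ] (Fin s → ℤ)) = span ℤ {v : Fin s → ℤ | Qf d v ≤ t} := by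
    rw [Submodule.map_span, himg]
  rw [← finrank_span_Qf d' hd' t, ← finrank_span_Qf d hd t, ← hmap,
    LinearEquiv.finrank_map_eq]

lemma count_fiber (d d' : Fin s → ℤ)
    (h : ∀ t : ℤ, (univ.filter fun i => d' i ≤ t).card = (univ.filter fun i => d i ≤ t).card)
    (c : ℤ) :
    (univ.filter fun i => d' i = c).card = (univ.filter fun i => d i = c).card := by
  have key : ∀ f : Fin s → ℤ, (univ.filter fun i => f i ≤ c).card =
      (univ.filter fun i => f i = c).card + (univ.filter fun i => f i ≤ c - 1).card := by
    intro f
    rw [← Finset.card_union_of_disjoint]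
    · congr 1
      ext i; simp; omega
    · rw [Finset.disjoint_filter]
      intro i _ h1; simp; omega
  have h1 := h c
  have h2 := h (c - 1)
  have k1 := key d
  have k2 := key d'
  omega

lemma exists_perm_of_count (d d' : Fin s → ℤ)
    (h : ∀ c : ℤ, (univ.filter fun i => d' i = c).card = (univ.filter fun i => d i = c).card) :
    ∃ σ : Equiv.Perm (Fin s), ∀ k, d (σ k) = d' k := by
  have e : ∀ c : ℤ, {a : Fin s // d' a = c} ≃ {b : Fin s // d b = c} := fun c =>
    Fintype.equivOfCardEq (by rw [Fintype.card_subtype, Fintype.card_subtype]; exact h c)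
  exact ⟨Equiv.ofFiberEquiv e, fun k => Equiv.ofFiberEquiv_map e k⟩
lemma perm_congr (d d' : Fin s → ℤ) (σ : Equiv.Perm (Fin s)) (hσ : ∀ k, d (σ k) = d' k) :
    ∃ P : Matrix (Fin s) (Fin s) ℤ, IsUnit P.det ∧
      Pᵀ * Matrix.diagonal d * P = Matrix.diagonal d' := by
  refine ⟨Matrix.of fun i j => if σ j = i then 1 else 0, ?_, ?_⟩
  · have hmul : (Matrix.of fun i j => if σ j = i then (1:ℤ) else 0) *
        (Matrix.of fun i j => if σ j = i then (1:ℤ) else 0)ᵀ = 1 := by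
      ext i j
      rw [Matrix.mul_apply]
      rw [Finset.sum_eq_single (σ.symm i)]
      · simp only [Matrix.of_apply, Matrix.transpose_apply, Equiv.apply_symm_apply,
          Matrix.one_apply]
        by_cases hij : i = j <;> simp [hij]
      · intro k _ hk
        rw [Matrix.of_apply, if_neg, zero_mul]
        intro h; exact hk (by rw [← h]; simp)
      · simp
    have := congrArg Matrix.det hmul
    rw [Matrix.det_mul, Matrix.det_one] at this
    exact IsUnit.of_mul_eq_one _ this
  · ext a b
    rw [Matrix.mul_apply]
    simp only [Matrix.mul_diagonal, Matrix.transpose_apply, Matrix.of_apply]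
    rw [Finset.sum_eq_single (σ a)]
    · by_cases hab : a = b
      · subst hab; simp [hσ a]
      · rw [if_pos rfl, if_neg (fun h : σ b = σ a => hab (σ.injective h).symm),
          Matrix.diagonal_apply_ne _ hab]
        ring
    · intro k _ hk
      rw [if_neg (fun h : σ a = k => hk h.symm)]
      simp
    · simp
lemma dvec_pos (m : Fin s → ℤ) (hm : StrictAnti m) (hs : 1 ≤ s)
    (hms : 1 ≤ m ⟨s - 1, by omega⟩) : ∀ k, 0 < dvec m k := by
  intro k
  unfold dvec
  split_ifs with h
  · have hk : k < (⟨(k : ℕ) + 1, h⟩ : Fin s) := by simp [Fin.lt_def]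
    have := hm hk
    linarith
  · have hk : k = ⟨s - 1, by omega⟩ := Fin.ext (by have := k.isLt; simp; omega)
    rw [hk]
    linarith

end Stmt7Aux


/-- For strictly decreasing positive integer sequences `m_1 > ... > m_s ≥ 1` and
`n_1 > ... > n_s ≥ 1` with `m_1 = n_1`, the symmetric matrices with `(i,j)`-entry
`m_{max(i,j)}` resp. `n_{max(i,j)}` are congruent over `ℤ` if and only if the multisets of
successive differences `{{m_1-m_2, ..., m_{s-1}-m_s, m_s}}` and
`{{n_1-n_2, ..., n_{s-1}-n_s, n_s}}` coincide. -/
theorem stmt7 (s : ℕ) (hs : 2 ≤ s) (m nn : Fin s → ℤ)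
    (hm : StrictAnti m) (hn : StrictAnti nn)
    (hms : 1 ≤ m ⟨s - 1, by omega⟩) (hns : 1 ≤ nn ⟨s - 1, by omega⟩)
    (h1 : m ⟨0, by omega⟩ = nn ⟨0, by omega⟩) :
    (∃ H : Matrix (Fin s) (Fin s) ℤ, IsUnit H.det ∧
        H.transpose * (Matrix.of fun i j => m (max i j)) * H =
          Matrix.of fun i j => nn (max i j)) ↔
      ∃ σ : Equiv.Perm (Fin s), ∀ k : Fin s,
        (nn k - if h : (k : ℕ) + 1 < s then nn ⟨(k : ℕ) + 1, h⟩ else 0) =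
        (m (σ k) - if h : ((σ k : Fin s) : ℕ) + 1 < s then m ⟨((σ k : Fin s) : ℕ) + 1, h⟩
          else 0) := by
  have hdm : ∀ k, 0 < dvec m k := dvec_pos m hm (by omega) hms
  have hdn : ∀ k, 0 < dvec nn k := dvec_pos nn hn (by omega) hns
  have hL : IsUnit (Ls s).det := by rw [Ls_det]; exact isUnit_one
  have h1L : Ls s * (Ls s)⁻¹ = 1 := Matrix.mul_nonsing_inv _ hL
  have c1 : ∀ W : Matrix (Fin s) (Fin s) ℤ, Ls s * ((Ls s)⁻¹ * W) = W := fun W => by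
    rw [← Matrix.mul_assoc, h1L, Matrix.one_mul]
  have c2 : ∀ W : Matrix (Fin s) (Fin s) ℤ, ((Ls s)⁻¹)ᵀ * ((Ls s)ᵀ * W) = W := fun W => by
    rw [← Matrix.mul_assoc, ← Matrix.transpose_mul, h1L, Matrix.transpose_one,
      Matrix.one_mul]
  constructor
  · rintro ⟨H, hH, hcong⟩
    rw [Xfact m, Xfact nn] at hcong
    set G := Ls s * H * (Ls s)⁻¹ with hG
    have hGdet : IsUnit G.det := by
      rw [hG, Matrix.det_mul, Matrix.det_mul]
      exact (hL.mul hH).mul (Matrix.isUnit_nonsing_inv_det _ hL)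
    have hGcong : Gᵀ * Matrix.diagonal (dvec m) * G = Matrix.diagonal (dvec nn) := by
      have e1 : Gᵀ * Matrix.diagonal (dvec m) * G =
          ((Ls s)⁻¹)ᵀ * (Hᵀ * ((Ls s)ᵀ * Matrix.diagonal (dvec m) * Ls s) * H) * (Ls s)⁻¹ := by
        rw [hG]; simp only [Matrix.transpose_mul, Matrix.mul_assoc]
      rw [e1, hcong]
      simp only [Matrix.mul_assoc, h1L, Matrix.mul_one, c2]
    have hcount := count_eq (dvec m) (dvec nn) hdm hdn G hGdet hGcong
    obtain ⟨σ, hσ⟩ := exists_perm_of_count (dvec m) (dvec nn) (count_fiber _ _ hcount)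
    exact ⟨σ, fun k => by simpa [dvec] using (hσ k).symm⟩
  · rintro ⟨σ, hσ⟩
    have hσ' : ∀ k, dvec m (σ k) = dvec nn k := fun k => by
      simpa [dvec] using (hσ k).symm
    obtain ⟨P, hPdet, hPcong⟩ := perm_congr (dvec m) (dvec nn) σ hσ'
    refine ⟨(Ls s)⁻¹ * P * Ls s, ?_, ?_⟩
    · rw [Matrix.det_mul, Matrix.det_mul]
      exact ((Matrix.isUnit_nonsing_inv_det _ hL).mul hPdet).mul hL
    · rw [Xfact m, Xfact nn, ← hPcong]
      simp only [Matrix.transpose_mul, Matrix.mul_assoc, c1, c2]
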